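/- Let α ∈ (0, 1/2], let M₊ and M₋ be surjective isometries of ℝ², and set P₊ = M₊ '' {y : y₁ ≥ 0 and |y₂| ≤ y₁^α} and P₋ = M₋ '' {y : y₁ ≥ 0 and |y₂| ≤ y₁^α}. Let U ⊆ ℝ² satisfy P₊ ⊆ U and P₋ ⊆ Uᶜ. Let Γ = Γ₋ ∪ Γ₀ ∪ Γ₊, where Γ₊ = M₊ '' {y : y₁ ≥ 0 and y₂ = 0}, Γ₋ = M₋ '' {y : y₁ ≥ 0 and y₂ = 0}, and Γ₀ is the line segment joining M₋(0) to M₊(0). Let R ≥ 5 + 2^{1+1/α} be such that ‖M₊(0)‖ ≤ R and ‖M₋(0)‖ ≤ R. Then for every x ∈ ℝ² with ‖x‖ ≥ 2R, one has d(x, ∂U) + d(x, Γ) ≥ 2^{−2−α} ‖x‖^α. -/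
import Mathlib


open Metric Set

noncomputable section

lemma coord_abs_le_dist (w y : EuclideanSpace ℝ (Fin 2)) (i : Fin 2) :
    |w i - y i| ≤ dist w y := by
  have := EuclideanSpace.dist_eq w y
  rw [this]
  have h1 : |w i - y i| = Real.sqrt (dist (w i) (y i) ^ 2) := by
    rw [Real.sqrt_sq (dist_nonneg), Real.dist_eq]
  rw [h1]
  apply Real.sqrt_le_sqrt
  exact Finset.single_le_sum (f := fun j => dist (w j) (y j) ^ 2)
    (fun j _ => sq_nonneg _) (Finset.mem_univ i)

/-- Key lemma: if the horn image is inside `S` and `T` avoids the interior of `S`,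
then the distance from `x` to `T` plus distance to a deep spine point is at least
the horn half-width there. -/
lemma key_side (α : ℝ) (hα : 0 < α) (hα1 : α ≤ 1)
    (M : EuclideanSpace ℝ (Fin 2) ≃ᵢ EuclideanSpace ℝ (Fin 2))
    (S : Set (EuclideanSpace ℝ (Fin 2)))
    (hS : M '' {y : EuclideanSpace ℝ (Fin 2) | 0 ≤ y 0 ∧ |y 1| ≤ (y 0) ^ α} ⊆ S)
    (T : Set (EuclideanSpace ℝ (Fin 2))) (hT : T.Nonempty)
    (hTS : ∀ z ∈ T, z ∉ interior S)
    (y : EuclideanSpace ℝ (Fin 2)) (hy0 : 2 ≤ y 0) (hy1 : y 1 = 0)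
    (x : EuclideanSpace ℝ (Fin 2)) :
    (y 0 / 2) ^ α ≤ infDist x T + dist x (M y) := by
  set t : ℝ := y 0 with ht
  set ρ : ℝ := (t / 2) ^ α with hρ
  have ht1 : (1 : ℝ) ≤ t / 2 := by linarith
  have hρ_le : ρ ≤ t / 2 := by
    calc ρ ≤ (t / 2) ^ (1 : ℝ) :=
          Real.rpow_le_rpow_of_exponent_le ht1 hα1
      _ = t / 2 := Real.rpow_one _
  -- the ball around M y of radius ρ is inside S
  have hball : ball (M y) ρ ⊆ S := by
    intro z hz
    have hzS : z = M (M.symm z) := (M.apply_symm_apply z).symm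
    set w := M.symm z with hw
    have hdist : dist w y = dist z (M y) := by
      rw [hw, ← M.dist_eq (M.symm z) y]
      simp
    have hdw : dist w y < ρ := by rw [hdist]; exact mem_ball.mp hz
    have h0 : |w 0 - t| ≤ dist w y := coord_abs_le_dist w y 0
    have h1 : |w 1| ≤ dist w y := by
      have := coord_abs_le_dist w y 1
      rwa [hy1, sub_zero] at this
    have hw0 : t / 2 ≤ w 0 := by
      have := abs_le.mp h0
      have := this.1
      linarith [hρ_le, hdw]
    have hw0' : (0 : ℝ) ≤ w 0 := by linarith
    have hw1 : |w 1| ≤ (w 0) ^ α :=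
      le_trans (le_of_lt (lt_of_le_of_lt h1 hdw))
        (Real.rpow_le_rpow (by linarith) hw0 hα.le)
    apply hS
    exact ⟨w, ⟨hw0', hw1⟩, (M.apply_symm_apply z)⟩
  have hball' : ball (M y) ρ ⊆ interior S := interior_maximal hball isOpen_ball
  -- so every point of T is at distance ≥ ρ from M y
  by_contra hcon
  push_neg at hcon
  have h' : infDist x T < ρ - dist x (M y) := by linarith
  obtain ⟨z, hzT, hz⟩ := (infDist_lt_iff hT).mp h'
  have : dist (M y) z < ρ := by
    calc dist (M y) z ≤ dist (M y) x + dist x z := dist_triangle _ _ _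
      _ < dist (M y) x + (ρ - dist x (M y)) := by linarith
      _ = ρ := by rw [dist_comm]; ring
  exact hTS z hzT (hball' (mem_ball'.mpr this))

theorem transversality_estimate (α : ℝ) (hα : 0 < α) (hα' : α ≤ 1 / 2)
    (Mp Mm : EuclideanSpace ℝ (Fin 2) ≃ᵢ EuclideanSpace ℝ (Fin 2))
    (U : Set (EuclideanSpace ℝ (Fin 2)))
    (hPp : Mp '' {y : EuclideanSpace ℝ (Fin 2) | 0 ≤ y 0 ∧ |y 1| ≤ (y 0) ^ α} ⊆ U)
    (hPm : Mm '' {y : EuclideanSpace ℝ (Fin 2) | 0 ≤ y 0 ∧ |y 1| ≤ (y 0) ^ α} ⊆ Uᶜ)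
    (Γ : Set (EuclideanSpace ℝ (Fin 2)))
    (hΓ : Γ = Mm '' {y : EuclideanSpace ℝ (Fin 2) | 0 ≤ y 0 ∧ y 1 = 0}
            ∪ segment ℝ (Mm 0) (Mp 0)
            ∪ Mp '' {y : EuclideanSpace ℝ (Fin 2) | 0 ≤ y 0 ∧ y 1 = 0})
    (R : ℝ) (hR : 5 + 2 ^ (1 + 1 / α) ≤ R)
    (hRp : ‖Mp 0‖ ≤ R) (hRm : ‖Mm 0‖ ≤ R)
    (x : EuclideanSpace ℝ (Fin 2)) (hx : 2 * R ≤ ‖x‖) :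
    2 ^ (-2 - α) * ‖x‖ ^ α ≤ infDist x (frontier U) + infDist x Γ := by
  have hα1 : α ≤ 1 := by linarith
  -- numeric bounds
  have h2 : (1 : ℝ) ≤ 2 := one_le_two
  have hinv : (3 : ℝ) ≤ 1 + 1 / α := by
    have : (2 : ℝ) ≤ 1 / α := by
      rw [le_div_iff₀ hα]; linarith
    linarith
  have h8 : (8 : ℝ) ≤ 2 ^ (1 + 1 / α) := by
    calc (8 : ℝ) = 2 ^ (3 : ℝ) := by
          rw [show (3:ℝ) = ((3:ℕ):ℝ) by norm_num, Real.rpow_natCast]; norm_num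
      _ ≤ 2 ^ (1 + 1 / α) := Real.rpow_le_rpow_of_exponent_le h2 hinv
  have hR13 : (13 : ℝ) ≤ R := by linarith
  have hx26 : (26 : ℝ) ≤ ‖x‖ := by linarith
  have hx1 : (1 : ℝ) ≤ ‖x‖ := by linarith
  set B : ℝ := 2 ^ (-2 - α) * ‖x‖ ^ α with hB
  have h2a : (2:ℝ) ^ (-2 - α) ≤ 1 / 4 := by
    have h14 : (2:ℝ) ^ (-2 : ℝ) = 1/4 := by
      rw [show (-2:ℝ) = ((-2:ℤ):ℝ) by norm_num, Real.rpow_intCast]; norm_num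
    calc (2:ℝ) ^ (-2 - α) ≤ 2 ^ (-2 : ℝ) :=
          Real.rpow_le_rpow_of_exponent_le h2 (by linarith)
      _ = 1/4 := h14
  have hxα : ‖x‖ ^ α ≤ ‖x‖ := by
    calc ‖x‖ ^ α ≤ ‖x‖ ^ (1:ℝ) := Real.rpow_le_rpow_of_exponent_le hx1 hα1
      _ = ‖x‖ := Real.rpow_one _
  have hxα_pos : 0 < ‖x‖ ^ α := Real.rpow_pos_of_pos (by linarith) α
  have hB4 : B ≤ ‖x‖ / 4 := by
    calc B ≤ (1/4) * ‖x‖ ^ α :=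
          mul_le_mul_of_nonneg_right h2a hxα_pos.le
      _ ≤ (1/4) * ‖x‖ := by linarith
      _ = ‖x‖ / 4 := by ring
  -- Γ is nonempty
  have hΓne : Γ.Nonempty := by
    refine ⟨Mp 0, ?_⟩
    rw [hΓ]
    exact Or.inr ⟨0, ⟨le_refl _, rfl⟩, rfl⟩
  -- frontier U is nonempty
  have hfr : (frontier U).Nonempty := by
    rw [nonempty_frontier_iff]
    constructor
    · exact ⟨Mp 0, hPp ⟨0, ⟨le_refl _, by simp [Real.zero_rpow hα.ne']⟩, rfl⟩⟩
    · intro hU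
      have : Mm 0 ∈ Uᶜ := hPm ⟨0, ⟨le_refl _, by simp [Real.zero_rpow hα.ne']⟩, rfl⟩
      rw [hU] at this
      exact this (mem_univ _)
  by_cases hD : B ≤ infDist x Γ
  · have := infDist_nonneg (s := frontier U) (x := x)
    linarith
  push_neg at hD
  -- ε-argument
  apply le_of_forall_pos_le_add
  intro ε hε
  have hlt : infDist x Γ < min (infDist x Γ + ε) B := lt_min (by linarith) hD
  obtain ⟨p, hpΓ, hpd⟩ := (infDist_lt_iff hΓne).mp hlt
  have hpd1 : dist x p < infDist x Γ + ε := lt_of_lt_of_le hpd (min_le_left _ _)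
  have hpdB : dist x p < B := lt_of_lt_of_le hpd (min_le_right _ _)
  have hpd4 : dist x p < ‖x‖ / 4 := lt_of_lt_of_le hpdB hB4
  rw [hΓ] at hpΓ
  -- a spine point in either side: common treatment
  have main : ∀ (M : EuclideanSpace ℝ (Fin 2) ≃ᵢ EuclideanSpace ℝ (Fin 2))
      (S : Set (EuclideanSpace ℝ (Fin 2))),
      M '' {y : EuclideanSpace ℝ (Fin 2) | 0 ≤ y 0 ∧ |y 1| ≤ (y 0) ^ α} ⊆ S →
      (∀ z ∈ frontier U, z ∉ interior S) →
      ‖M 0‖ ≤ R →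
      p ∈ M '' {y : EuclideanSpace ℝ (Fin 2) | 0 ≤ y 0 ∧ y 1 = 0} →
      B ≤ infDist x (frontier U) + infDist x Γ + ε := by
    intro M S hSsub hfrS hM0 hp
    obtain ⟨y, ⟨hy0, hy1⟩, hyp⟩ := hp
    -- ‖y‖ = y 0
    have hny : dist y 0 = y 0 := by
      rw [dist_zero_right, EuclideanSpace.norm_eq, Fin.sum_univ_two, hy1]
      simp only [norm_zero, Real.norm_eq_abs, sq_abs]
      norm_num
      exact Real.sqrt_sq hy0
    have hdpM0 : dist p (M 0) = y 0 := by
      rw [← hyp, M.dist_eq]; exact hny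
    have hxM0 : ‖x‖ - R ≤ dist x (M 0) := by
      have : dist x (M 0) ≥ ‖x‖ - ‖M 0‖ := by
        have := norm_sub_norm_le x (M 0)
        rw [← dist_eq_norm] at this
        linarith
      linarith
    have hy0big : ‖x‖ / 4 ≤ y 0 := by
      have htri : dist x (M 0) ≤ dist x p + dist p (M 0) := dist_triangle _ _ _
      rw [hdpM0] at htri
      have hRx : R ≤ ‖x‖ / 2 := by linarith
      linarith
    have hy02 : (2 : ℝ) ≤ y 0 := by linarith
    have hkey := key_side α hα hα1 M S hSsub (frontier U) hfr hfrS y hy02 hy1 x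
    rw [hyp] at hkey
    -- B ≤ (y 0 / 2) ^ α
    have hBρ : B ≤ (y 0 / 2) ^ α := by
      have h8x : ‖x‖ / 8 ≤ y 0 / 2 := by linarith
      have hstep1 : B ≤ (‖x‖ / 8) ^ α := by
        have hdiv : (‖x‖ / 8) ^ α = ‖x‖ ^ α / 8 ^ α :=
          Real.div_rpow (by linarith) (by norm_num) α
        have h8α : (8 : ℝ) ^ α = 2 ^ (3 * α) := by
          rw [show (8:ℝ) = 2 ^ (3:ℝ) by
            rw [show (3:ℝ) = ((3:ℕ):ℝ) by norm_num, Real.rpow_natCast]; norm_num]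
          rw [← Real.rpow_mul (by norm_num)]
        have hexp : (2:ℝ) ^ (-2 - α) ≤ (2 ^ (3 * α))⁻¹ := by
          rw [← Real.rpow_neg (by norm_num)]
          exact Real.rpow_le_rpow_of_exponent_le h2 (by linarith)
        rw [hdiv, h8α, div_eq_mul_inv, hB, mul_comm (‖x‖ ^ α)]
        exact mul_le_mul_of_nonneg_right hexp hxα_pos.le
      refine hstep1.trans ?_
      exact Real.rpow_le_rpow (by linarith) h8x hα.le
    linarith
  rcases hpΓ with (hp | hp) | hp
  · -- Mm spine: S = Uᶜ
    exact main Mm Uᶜ hPm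
      (fun z hz => by
        rw [← frontier_compl] at hz
        exact fun h => hz.2 h)
      hRm hp
  · -- segment: contradiction
    exfalso
    have hpR : ‖p‖ ≤ R := by
      have : segment ℝ (Mm 0) (Mp 0) ⊆ closedBall 0 R := by
        apply (convex_closedBall (0 : EuclideanSpace ℝ (Fin 2)) R).segment_subset
        · exact mem_closedBall_zero_iff.mpr hRm
        · exact mem_closedBall_zero_iff.mpr hRp
      exact mem_closedBall_zero_iff.mp (this hp)
    have : ‖x‖ - R ≤ dist x p := by
      have := norm_sub_norm_le x p
      rw [← dist_eq_norm] at this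
      linarith
    have hRx : R ≤ ‖x‖ / 2 := by linarith
    linarith
  · -- Mp spine: S = U
    exact main Mp U hPp (fun z hz h => hz.2 h) hRp hp
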